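/- Under the assumptions of the main theorem with M ≤ 0 and E[S_N] < 0, and assuming the roots α_1, ..., α_{D-1} of G_N(s) = 1 in {|s| ≤ 1, s ≠ 1} are simple, the initial value F_∞(0) is given by F_∞(0) = (-E[S_N]/f_N(-D)) · Π_{j=1}^{D-1} α_j/(α_j - 1). -/

import Mathlib

open Polynomial

lemma prod_X_sub_C_dvd_of_roots {K : Type*} [Field K] [DecidableEq K] (s : Finset K) :
    ∀ (p : K[X]), (∀ a ∈ s, p.IsRoot a) → (∏ a ∈ s, (X - C a)) ∣ p := by
  induction s using Finset.induction_on with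
  | empty => intro p _; simp
  | @insert a s ha ih =>
    intro p h
    obtain ⟨q, hq⟩ := (dvd_iff_isRoot).2 (h a (Finset.mem_insert_self a s))
    rw [Finset.prod_insert ha, hq]
    refine mul_dvd_mul_left _ (ih q fun b hb => ?_)
    have hb' := h b (Finset.mem_insert_of_mem hb)
    have hba : b ≠ a := fun e => ha (e ▸ hb)
    rw [hq] at hb'
    simp only [IsRoot, eval_mul, eval_sub, eval_X, eval_C, mul_eq_zero] at hb'
    rcases hb' with h1 | h1
    · exact absurd (sub_eq_zero.mp h1) hba
    · exact h1

/-- Closed form for `F_∞(0)`: if `(v 0, …, v (D-1))` solves the linear system built from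
the simple roots `α_1, …, α_{D-1}` of `G_N(s) = 1` in `{|s| ≤ 1, s ≠ 1}` together with the
expectation row, then `F_∞(0) = (-E[S_N]/f_N(-D)) ∏_j α_j/(α_j - 1)`. -/
theorem Finfty_zero_closed_form (D : ℕ) (hD : 1 ≤ D)
    (f : ℤ → ℝ) (hf0 : ∀ j, 0 ≤ f j)
    (hfsupp : ∀ j : ℤ, j < -(D : ℤ) → f j = 0)
    (hfD : 0 < f (-(D : ℤ)))
    (hfsum : HasSum (fun k : ℕ => f ((k : ℤ) - D)) 1)
    (FN : ℤ → ℝ) (hFN : ∀ k : ℤ, HasSum (fun n : ℕ => f (k - n)) (FN k))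
    (ES : ℝ) (hES : HasSum (fun k : ℕ => ((k : ℝ) - D) * f ((k : ℤ) - D)) ES)
    (hESneg : ES < 0)
    (α : Fin (D - 1) → ℂ) (hαinj : Function.Injective α)
    (hαroot : ∀ i, ‖α i‖ ≤ 1 ∧ α i ≠ 1 ∧
      (∑' k : ℕ, (f ((k : ℤ) - D) : ℂ) * α i ^ k) = α i ^ D)
    (v : ℕ → ℝ) (hv01 : ∀ j, 0 ≤ v j ∧ v j ≤ 1)
    (hsys : ∀ i, ∑ j ∈ Finset.range D, (v j : ℂ) *
      ∑ x ∈ Finset.Icc j (D - 1), (f ((x : ℤ) - D - j) : ℂ) * α i ^ x = 0)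
    (hlast : ∑ j ∈ Finset.range D, v j * FN (-(j : ℤ) - 1) = -ES) :
    (v 0 : ℂ) = ((-ES / f (-(D : ℤ))) : ℝ) * ∏ j : Fin (D - 1), α j / (α j - 1) := by
  classical
  set Q : ℂ[X] := ∑ j ∈ Finset.range D, C (v j : ℂ) *
      ∑ x ∈ Finset.Icc j (D - 1), C (f ((x : ℤ) - D - j) : ℂ) * X ^ x with hQ
  set P : ℂ[X] := ∏ i : Fin (D - 1), (X - C (α i)) with hP
  -- roots of Q
  have hQroot : ∀ i, Q.IsRoot (α i) := by
    intro i
    have := hsys i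
    simpa [hQ, IsRoot, eval_finset_sum] using this
  -- P divides Q
  have hPdvd : P ∣ Q := by
    have himg : P = ∏ a ∈ Finset.univ.image α, (X - C a) := by
      rw [Finset.prod_image fun x _ y _ h => hαinj h]
    rw [himg]
    refine prod_X_sub_C_dvd_of_roots _ Q fun a ha => ?_
    obtain ⟨i, _, rfl⟩ := Finset.mem_image.mp ha
    exact hQroot i
  -- degrees
  have hPdeg : P.natDegree = D - 1 := by
    rw [hP, Polynomial.natDegree_prod _ _ fun i _ => X_sub_C_ne_zero (α i)]
    simp
  have hQdeg : Q.natDegree ≤ D - 1 := by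
    refine Polynomial.natDegree_sum_le_of_forall_le _ _ fun j hj => ?_
    refine (natDegree_C_mul_le _ _).trans ?_
    refine Polynomial.natDegree_sum_le_of_forall_le _ _ fun x hx => ?_
    refine (natDegree_C_mul_le _ _).trans ?_
    simpa using (Finset.mem_Icc.mp hx).2
  -- FN finite sum identity
  have hFNfin : ∀ j, j < D → FN (-(j : ℤ) - 1) =
      ∑ x ∈ Finset.Icc j (D - 1), f ((x : ℤ) - D - j) := by
    intro j hj
    have hz : ∀ n : ℕ, n ∉ Finset.range (D - j) → f (-(j : ℤ) - 1 - n) = 0 := by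
      intro n hn
      refine hfsupp _ ?_
      simp only [Finset.mem_range, not_lt] at hn
      push_cast
      omega
    have h1 := (hasSum_sum_of_ne_finset_zero hz).unique (hFN (-(j : ℤ) - 1))
    rw [← h1]
    refine Finset.sum_nbij' (fun n => D - 1 - n) (fun x => D - 1 - x) ?_ ?_ ?_ ?_ ?_
    · intro a ha; simp only [Finset.mem_range] at ha; simp only [Finset.mem_Icc]; omega
    · intro a ha; simp only [Finset.mem_Icc] at ha; simp only [Finset.mem_range]; omega
    · intro a ha; simp only [Finset.mem_range] at ha; omega
    · intro a ha; simp only [Finset.mem_Icc] at ha; omega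
    · intro a ha
      simp only [Finset.mem_range] at ha
      congr 1
      have : ((D - 1 - a : ℕ) : ℤ) = (D : ℤ) - 1 - a := by push_cast; omega
      rw [this]; ring
  -- eval at 1
  have hE1 : Q.eval 1 = (-ES : ℂ) := by
    have : Q.eval 1 = ∑ j ∈ Finset.range D,
        (v j : ℂ) * ∑ x ∈ Finset.Icc j (D - 1), (f ((x : ℤ) - D - j) : ℂ) := by
      simp [hQ, eval_finset_sum]
    rw [this]
    have : ∀ j ∈ Finset.range D, (v j : ℂ) * ∑ x ∈ Finset.Icc j (D - 1),
        (f ((x : ℤ) - D - j) : ℂ) = ((v j * FN (-(j : ℤ) - 1) : ℝ) : ℂ) := by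
      intro j hj
      rw [hFNfin j (Finset.mem_range.mp hj)]
      push_cast
      ring
    rw [Finset.sum_congr rfl this, ← Complex.ofReal_sum]
    rw [hlast]
    push_cast
    ring
  -- eval at 0
  have hE0 : Q.eval 0 = (v 0 : ℂ) * (f (-(D : ℤ)) : ℂ) := by
    have he : Q.eval 0 = ∑ j ∈ Finset.range D,
        (v j : ℂ) * ∑ x ∈ Finset.Icc j (D - 1), (f ((x : ℤ) - D - j) : ℂ) * (0 : ℂ) ^ x := by
      simp [hQ, eval_finset_sum]
    rw [he]
    rw [Finset.sum_eq_single_of_mem 0 (Finset.mem_range.mpr hD)]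
    · rw [Finset.sum_eq_single_of_mem 0 (Finset.mem_Icc.mpr ⟨le_refl 0, Nat.zero_le _⟩)]
      · norm_num
      · intro x _ hx; simp [zero_pow hx]
    · intro j _ hj
      have : ∑ x ∈ Finset.Icc j (D - 1), (f ((x : ℤ) - D - j) : ℂ) * (0 : ℂ) ^ x = 0 := by
        refine Finset.sum_eq_zero fun x hx => ?_
        have : x ≠ 0 := by
          have := (Finset.mem_Icc.mp hx).1; omega
        simp [zero_pow this]
      rw [this, mul_zero]
  -- Q = P * C c
  obtain ⟨R, hR⟩ := hPdvd
  have hRC : ∃ c : ℂ, R = C c := by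
    by_cases hR0 : R = 0
    · exact ⟨0, by simp [hR0]⟩
    · have hP0 : P ≠ 0 := by
        rw [hP]
        exact Finset.prod_ne_zero_iff.mpr fun i _ => X_sub_C_ne_zero (α i)
      have := Polynomial.natDegree_mul hP0 hR0
      rw [← hR, hPdeg] at this
      have hR0' : R.natDegree = 0 := by omega
      obtain ⟨c, hc⟩ := Polynomial.natDegree_eq_zero.mp hR0'
      exact ⟨c, hc.symm⟩
  obtain ⟨c, rfl⟩ := hRC
  -- evaluate the factorization
  have hPE0 : P.eval 0 = ∏ i : Fin (D - 1), (-(α i)) := by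
    simp [hP, eval_prod]
  have hPE1 : P.eval 1 = ∏ i : Fin (D - 1), (1 - α i) := by
    simp [hP, eval_prod]
  have h1 : (v 0 : ℂ) * (f (-(D : ℤ)) : ℂ) = (∏ i : Fin (D - 1), (-(α i))) * c := by
    rw [← hE0, hR]; simp [hPE0]
  have h2 : (-ES : ℂ) = (∏ i : Fin (D - 1), (1 - α i)) * c := by
    rw [← hE1, hR]; simp [hPE1]
  -- algebra
  have hfne : (f (-(D : ℤ)) : ℂ) ≠ 0 := by
    exact_mod_cast ne_of_gt hfD
  have hBne : ∀ i : Fin (D - 1), α i - 1 ≠ 0 := fun i =>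
    sub_ne_zero.mpr (hαroot i).2.1
  have hkey : ∏ i : Fin (D - 1), (-(α i)) * (α i - 1) =
      (∏ i : Fin (D - 1), (1 - α i)) * ∏ i : Fin (D - 1), α i := by
    rw [← Finset.prod_mul_distrib]
    exact Finset.prod_congr rfl fun i _ => by ring
  rw [Finset.prod_div_distrib]
  push_cast
  rw [div_mul_div_comm, eq_div_iff (mul_ne_zero hfne (Finset.prod_ne_zero_iff.mpr fun i _ => hBne i))]
  calc (v 0 : ℂ) * ((f (-(D : ℤ)) : ℂ) * ∏ i : Fin (D - 1), (α i - 1))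
      = ((v 0 : ℂ) * (f (-(D : ℤ)) : ℂ)) * ∏ i : Fin (D - 1), (α i - 1) := by ring
    _ = ((∏ i : Fin (D - 1), (-(α i))) * ∏ i : Fin (D - 1), (α i - 1)) * c := by rw [h1]; ring
    _ = ((∏ i : Fin (D - 1), (1 - α i)) * ∏ i : Fin (D - 1), α i) * c := by
        rw [← Finset.prod_mul_distrib, hkey]
    _ = (-ES : ℂ) * ∏ i : Fin (D - 1), α i := by rw [h2]; ring
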